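/- Let n ≥ 7 and let r, l be nonzero complex numbers with r^(2k) ≠ 1 for all integers k with 1 ≤ k ≤ n. If l belongs to both {r, -r³, r^(-(2n-5)), r^(-(n-4)), -r^(-(n-4))} and {r, -r³, r^(-(2n-7)), r^(-(n-5)), -r^(-(n-5))}, then l = r or l = -r³. -/
import Mathlib

lemma sq_zpow_eq (r : ℂ) (hr : r ≠ 0) (a b : ℤ) (h : (r ^ a) ^ 2 = (r ^ b) ^ 2) :
    r ^ (2 * (a - b)) = 1 := by
  have h1 : r ^ (2 * a) = r ^ (2 * b) := by
    rw [two_mul, two_mul, zpow_add₀ hr, zpow_add₀ hr, ← pow_two, ← pow_two, h]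
  rw [mul_sub, zpow_sub₀ hr, h1, div_self (zpow_ne_zero _ hr)]

lemma aux2 {n : ℕ} {r : ℂ} (hsemi : ∀ k : ℕ, 1 ≤ k → k ≤ n → r ^ (2 * k) ≠ 1)
    (k : ℕ) (hk1 : 1 ≤ k) (hk2 : k ≤ n) {m : ℤ} (hm : m = 2 * k ∨ m = -(2 * k))
    (h : r ^ m = 1) : False := by
  apply hsemi k hk1 hk2
  rcases hm with rfl | rfl
  · exact_mod_cast h
  · rw [zpow_neg, inv_eq_one] at h; exact_mod_cast h

theorem stmt_3 (n : ℕ) (hn : 7 ≤ n) (r l : ℂ) (hr : r ≠ 0) (hl : l ≠ 0)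
    (hsemi : ∀ k : ℕ, 1 ≤ k → k ≤ n → r ^ (2 * k) ≠ 1)
    (h1 : l ∈ ({r, -r ^ 3, r ^ (-(2 * (n : ℤ) - 5)), r ^ (-((n : ℤ) - 4)),
      -r ^ (-((n : ℤ) - 4))} : Set ℂ))
    (h2 : l ∈ ({r, -r ^ 3, r ^ (-(2 * (n : ℤ) - 7)), r ^ (-((n : ℤ) - 5)),
      -r ^ (-((n : ℤ) - 5))} : Set ℂ)) :
    l = r ∨ l = -r ^ 3 := by
  simp only [Set.mem_insert_iff, Set.mem_singleton_iff] at h1 h2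
  set A1 := r ^ (-(2 * (n : ℤ) - 5)) with hA1
  set A2 := r ^ (-((n : ℤ) - 4)) with hA2
  set B1 := r ^ (-(2 * (n : ℤ) - 7)) with hB1
  set B2 := r ^ (-((n : ℤ) - 5)) with hB2
  rcases h1 with h1 | h1 | h1 | h1 | h1
  · exact Or.inl h1
  · exact Or.inr h1
  all_goals rcases h2 with h2 | h2 | h2 | h2 | h2
  all_goals (try exact Or.inl h2)
  all_goals (try exact Or.inr h2)
  all_goals exfalso
  all_goals rw [h1] at h2
  -- case A1 vs B1 : r^2·... difference -4
  · exact aux2 hsemi 2 (by norm_num) (by omega) (Or.inr (by omega))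
      (sq_zpow_eq r hr (-(2 * (n : ℤ) - 5)) (-(2 * (n : ℤ) - 7))
        (by linear_combination (A1 + B1) * h2))
  · exact aux2 hsemi n (by omega) le_rfl (Or.inr (by omega))
      (sq_zpow_eq r hr (-(2 * (n : ℤ) - 5)) (-((n : ℤ) - 5))
        (by linear_combination (A1 + B2) * h2))
  · exact aux2 hsemi n (by omega) le_rfl (Or.inr (by omega))
      (sq_zpow_eq r hr (-(2 * (n : ℤ) - 5)) (-((n : ℤ) - 5))
        (by linear_combination (A1 - B2) * h2))
  · exact aux2 hsemi (n - 3) (by omega) (by omega) (Or.inl (by omega))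
      (sq_zpow_eq r hr (-((n : ℤ) - 4)) (-(2 * (n : ℤ) - 7))
        (by linear_combination (A2 + B1) * h2))
  · exact aux2 hsemi 1 le_rfl (by omega) (Or.inr (by omega))
      (sq_zpow_eq r hr (-((n : ℤ) - 4)) (-((n : ℤ) - 5))
        (by linear_combination (A2 + B2) * h2))
  · exact aux2 hsemi 1 le_rfl (by omega) (Or.inr (by omega))
      (sq_zpow_eq r hr (-((n : ℤ) - 4)) (-((n : ℤ) - 5))
        (by linear_combination (A2 - B2) * h2))
  · exact aux2 hsemi (n - 3) (by omega) (by omega) (Or.inl (by omega))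
      (sq_zpow_eq r hr (-((n : ℤ) - 4)) (-(2 * (n : ℤ) - 7))
        (by linear_combination (B1 - A2) * h2))
  · exact aux2 hsemi 1 le_rfl (by omega) (Or.inr (by omega))
      (sq_zpow_eq r hr (-((n : ℤ) - 4)) (-((n : ℤ) - 5))
        (by linear_combination (B2 - A2) * h2))
  · exact aux2 hsemi 1 le_rfl (by omega) (Or.inr (by omega))
      (sq_zpow_eq r hr (-((n : ℤ) - 4)) (-((n : ℤ) - 5))
        (by linear_combination (-(A2 + B2)) * h2))
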